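/- For every real x ≠ 0, the momentum function p(λ) = −i·Log(−i·tanh λ) satisfies p(x − iπ/4) = −π·sign(x) + π/2 − 2·arctan(e^{−2x}), where sign(x) = 1 for x > 0 and sign(x) = −1 for x < 0; in particular p is real-valued on the line ℝ − iπ/4 away from the point −iπ/4. -/

import Mathlib

open Complex Real

/-- The momentum function of the XX chain: `p(λ) = -i Log(-i tanh λ)`,
with `Log` the principal branch of the complex logarithm. -/
noncomputable def momentum (l : ℂ) : ℂ := -Complex.I * Complex.log (-Complex.I * Complex.tanh l)

/-- Gudermannian-type identity: `arctan ((1 - s²)/(2s)) = π/2 - 2 arctan s` for `s > 0`. -/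
lemma gud_aux (s : ℝ) (hs : 0 < s) :
    Real.arctan ((1 - s ^ 2) / (2 * s)) = π / 2 - 2 * Real.arctan s := by
  have h1 : 0 < Real.arctan s := by
    have := Real.arctan_strictMono hs
    rwa [Real.arctan_zero] at this
  have h2 : Real.arctan s < π / 2 := Real.arctan_lt_pi_div_two s
  refine Real.arctan_eq_of_tan_eq ?_ ⟨by linarith, by linarith⟩
  rw [Real.tan_pi_div_two_sub, Real.tan_two_mul, Real.tan_arctan]
  rcases eq_or_ne s 1 with h | h
  · simp [h]
  · rw [inv_div]

/-- For real `x ≠ 0`, `p(x - iπ/4) = -π sign(x) + π/2 - 2 arctan(e^{-2x})`, where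
`sign(x) = 1` for `x > 0` and `sign(x) = -1` for `x < 0`; in particular `p` is
real-valued on the line `ℝ - iπ/4` away from `-iπ/4`. -/
theorem momentum_on_lower_line (x : ℝ) (hx : x ≠ 0) :
    momentum (x - Complex.I * (π / 4)) =
      ((-π * (if 0 < x then (1 : ℝ) else -1) + π / 2
          - 2 * Real.arctan (Real.exp (-2 * x)) : ℝ) : ℂ) ∧
    (momentum (x - Complex.I * (π / 4))).im = 0 := by
  set u : ℝ := Real.exp (2 * x) with hu_def
  have hu : 0 < u := Real.exp_pos _
  set l : ℂ := (x : ℂ) - Complex.I * (π / 4) with hl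
  set a : ℝ := -2 * u / (1 + u ^ 2) with ha_def
  set b : ℝ := (1 - u ^ 2) / (1 + u ^ 2) with hb_def
  have hden : (0 : ℝ) < 1 + u ^ 2 := by positivity
  set T : ℂ := (a : ℂ) + (b : ℂ) * Complex.I with hT
  -- the square of exp l
  have hE2 : Complex.exp l * Complex.exp l = -(u : ℂ) * Complex.I := by
    rw [← Complex.exp_add]
    have h : l + l = ((2 * x : ℝ) : ℂ) + ((-(π / 2) : ℝ) : ℂ) * Complex.I := by
      rw [hl]; push_cast; ring
    rw [h, Complex.exp_add, Complex.exp_mul_I, ← Complex.ofReal_cos, ← Complex.ofReal_sin,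
      Real.cos_neg, Real.sin_neg, Real.cos_pi_div_two, Real.sin_pi_div_two,
      ← Complex.ofReal_exp]
    rw [hu_def]
    push_cast
    ring
  have hEne : Complex.exp l ≠ 0 := Complex.exp_ne_zero _
  have hu' : (u : ℂ) ≠ 0 := Complex.ofReal_ne_zero.2 hu.ne'
  have hinv : (Complex.exp l)⁻¹ = Complex.I / u * Complex.exp l := by
    refine (eq_inv_of_mul_eq_one_left ?_).symm
    rw [mul_assoc, hE2]
    field_simp
    linear_combination (-1 : ℂ) * Complex.I_sq
  have hune : (u : ℂ) + Complex.I ≠ 0 := by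
    intro h
    have := congrArg Complex.im h
    simp at this
  have hden2 : (1 : ℂ) + Complex.I / u ≠ 0 := by
    intro h
    have h2 : (u : ℂ) + Complex.I = 0 := by
      have := mul_eq_zero_of_right (u : ℂ) h
      rw [mul_add, mul_one, mul_div_cancel₀ _ hu'] at this
      linear_combination this
    exact hune h2
  have htanh : Complex.tanh l = (1 - Complex.I / u) / (1 + Complex.I / u) := by
    rw [Complex.tanh_eq_sinh_div_cosh, Complex.sinh, Complex.cosh, Complex.exp_neg, hinv,
      div_div_div_cancel_right₀ (two_ne_zero),
      show Complex.exp l - Complex.I / u * Complex.exp l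
          = Complex.exp l * (1 - Complex.I / u) by ring,
      show Complex.exp l + Complex.I / u * Complex.exp l
          = Complex.exp l * (1 + Complex.I / u) by ring,
      mul_div_mul_left _ _ hEne]
  have hdc : ((1 : ℂ) + (u : ℂ) ^ 2) ≠ 0 := by
    have h0 : ((1 + u ^ 2 : ℝ) : ℂ) ≠ 0 := Complex.ofReal_ne_zero.2 hden.ne'
    push_cast at h0
    exact h0
  have hz : -Complex.I * Complex.tanh l = T := by
    rw [htanh, hT, ha_def, hb_def]
    push_cast
    field_simp [hdc]
    ring_nf
    linear_combination (2 * (u : ℂ) ^ 2) * Complex.I_sq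
  -- re, im and abs of T
  have hre : T.re = a := by simp [hT]
  have him : T.im = b := by simp [hT]
  have h1 : a ^ 2 + b ^ 2 = 1 := by
    rw [ha_def, hb_def]
    field_simp
    ring
  have habs : ‖T‖ = 1 := by
    rw [hT, Complex.norm_def, Complex.normSq_add_mul_I, h1, Real.sqrt_one]
  have hlog : Complex.log T = (T.arg : ℂ) * Complex.I := by
    rw [Complex.log, habs, Real.log_one]
    simp
  have hm : momentum l = ((T.arg : ℝ) : ℂ) := by
    rw [momentum, hz, hlog]
    linear_combination (-(T.arg : ℂ)) * Complex.I_sq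
  have ha_neg : a < 0 := by
    rw [ha_def]
    apply div_neg_of_neg_of_pos _ hden
    linarith
  -- the arctan of the ratio
  have hs : Real.exp (-2 * x) = u⁻¹ := by
    rw [hu_def, ← Real.exp_neg]
    ring_nf
  have hba : b / a = (1 - (u⁻¹) ^ 2) / (2 * u⁻¹) := by
    rw [ha_def, hb_def]
    field_simp
    ring
  have harct : Real.arctan (b / a) = π / 2 - 2 * Real.arctan (Real.exp (-2 * x)) := by
    rw [hba, gud_aux _ (inv_pos.2 hu), hs]
  have hb1 : b ^ 2 < 1 := by nlinarith
  have harcsin : Real.arctan (b / a) = Real.arcsin (-b) := by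
    refine Real.arctan_eq_of_tan_eq ?_
      ⟨Real.neg_pi_div_two_lt_arcsin.2 (by nlinarith), Real.arcsin_lt_pi_div_two.2 (by nlinarith)⟩
    rw [Real.tan_arcsin]
    have hsq : Real.sqrt (1 - (-b) ^ 2) = -a := by
      rw [show 1 - (-b) ^ 2 = (-a) ^ 2 by nlinarith]
      exact Real.sqrt_sq (by linarith)
    rw [hsq]
    rw [div_eq_div_iff (by linarith) ha_neg.ne]
    ring
  have hval : T.arg = -π * (if 0 < x then (1 : ℝ) else -1) + π / 2
      - 2 * Real.arctan (Real.exp (-2 * x)) := by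
    rcases hx.lt_or_gt with hxn | hxp
    · -- x < 0 : u < 1, b > 0
      have hu1 : u < 1 := by
        rw [hu_def]
        exact Real.exp_lt_one_iff.2 (by linarith)
      have hb_pos : 0 ≤ b := by
        rw [hb_def]
        apply div_nonneg _ hden.le
        nlinarith
      rw [Complex.arg_of_re_neg_of_im_nonneg (by rwa [hre]) (by rwa [him]),
        Complex.neg_im, him, habs, div_one, ← harcsin, harct, if_neg (not_lt.2 hxn.le)]
      ring
    · -- x > 0 : u > 1, b < 0
      have hu1 : 1 < u := by
        rw [hu_def]
        exact Real.one_lt_exp_iff.2 (by linarith)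
      have hb_neg : b < 0 := by
        rw [hb_def]
        apply div_neg_of_neg_of_pos _ hden
        nlinarith
      rw [Complex.arg_of_re_neg_of_im_neg (by rwa [hre]) (by rwa [him]),
        Complex.neg_im, him, habs, div_one, ← harcsin, harct, if_pos hxp]
      ring
  constructor
  · rw [hm, hval]
  · rw [hm]
    exact Complex.ofReal_im _
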